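/- Let Y = (y, μ) have distinct values y_1 > ⋯ > y_{m'} > 0 with total multiplicity binom(n,2), and let 𝒫_y = {(r,s,t) ∈ {1,…,m'}³ : y_r + y_s = y_t and (r ≠ s or μ_r ≥ 2)}. The following purely combinatorial system is solvable if and only if Y is realizable: there exist binary variables P^r_{ij} ∈ {0,1} for each interval (i,j), i < j, and each r ∈ {1,…,m'}, and binary variables T^{rst}_{ijk} ∈ {0,1} for each refinement i < j < k and each (r,s,t) ∈ 𝒫_y, satisfying: (a) Σ_r P^r_{ij} = 1 for each interval; (b) Σ_{(i,j)} P^r_{ij} = μ_r for each r; (c) Σ_{(r,s,t) ∈ 𝒫_y} T^{rst}_{ijk} = 1 for each refinement i < j < k; (d) for each refinement and each r, P^r_{ij} = Σ_{(r,s,t) ∈ 𝒫_y} T^{rst}_{ijk}; (e) for each refinement and each s, P^s_{jk} = Σ_{(r,s,t) ∈ 𝒫_y} T^{rst}_{ijk}; and (f) for each refinement and each t, P^t_{ik} = Σ_{(r,s,t) ∈ 𝒫_y} T^{rst}_{ijk}. -/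
import Mathlib


open scoped Classical

/-- The difference multiset `Δx = {x j - x i : i < j}` of a tuple `x : ℝⁿ`. -/
def deltaMultiset (n : ℕ) (x : Fin n → ℝ) : Multiset ℝ :=
  (Finset.univ.filter (fun p : Fin n × Fin n => p.1 < p.2)).val.map
    (fun p => x p.2 - x p.1)

/-- The multiset with distinct values `y r` each of multiplicity `μ r`. -/
def multisetOf {m' : ℕ} (y : Fin m' → ℝ) (μ : Fin m' → ℕ) : Multiset ℝ :=
  (Finset.univ.val : Multiset (Fin m')).bind (fun r => Multiset.replicate (μ r) (y r))

/-- The two-partition set `𝒫_y = {(r,s,t) : y_r + y_s = y_t, with μ_r ≥ 2 when r = s}`. -/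
noncomputable def twoPartitions {m' : ℕ} (y : Fin m' → ℝ) (μ : Fin m' → ℕ) :
    Finset (Fin m' × Fin m' × Fin m') :=
  Finset.univ.filter
    (fun rst => y rst.1 + y rst.2.1 = y rst.2.2 ∧ (rst.1 ≠ rst.2.1 ∨ 2 ≤ μ rst.1))



lemma sum_binary_eq_card {α : Type*} (S : Finset α) (f : α → ℝ)
    (hf : ∀ a ∈ S, f a = 0 ∨ f a = 1) :
    ∑ a ∈ S, f a = ((S.filter (fun a => f a = 1)).card : ℝ) := by
  rw [← Finset.sum_boole]
  refine Finset.sum_congr rfl fun a ha => ?_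
  rcases hf a ha with h | h <;> simp [h]

lemma binary_sum_one {α : Type*} (S : Finset α) (f : α → ℝ)
    (hf : ∀ a ∈ S, f a = 0 ∨ f a = 1) (h1 : ∑ a ∈ S, f a = 1) :
    ∃ a₀ ∈ S, f a₀ = 1 ∧ ∀ a ∈ S, a ≠ a₀ → f a = 0 := by
  rw [sum_binary_eq_card S f hf] at h1
  have hc : (S.filter (fun a => f a = 1)).card = 1 := by exact_mod_cast h1
  obtain ⟨a₀, ha₀⟩ := Finset.card_eq_one.mp hc
  have hmem := Finset.mem_filter.mp (ha₀ ▸ Finset.mem_singleton_self a₀)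
  refine ⟨a₀, hmem.1, hmem.2, ?_⟩
  intro a ha hne
  rcases hf a ha with h | h
  · exact h
  · exfalso; apply hne
    have : a ∈ S.filter (fun a => f a = 1) := Finset.mem_filter.mpr ⟨ha, h⟩
    rw [ha₀, Finset.mem_singleton] at this; exact this

lemma count_deltaMultiset (n : ℕ) (x : Fin n → ℝ) (a : ℝ) :
    (deltaMultiset n x).count a =
      ((Finset.univ.filter (fun p : Fin n × Fin n => p.1 < p.2)).filter
        (fun p => a = x p.2 - x p.1)).card := by
  rw [deltaMultiset, Multiset.count_map]
  rfl

lemma count_multisetOf {m' : ℕ} (y : Fin m' → ℝ) (μ : Fin m' → ℕ) (a : ℝ) :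
    (multisetOf y μ).count a = ∑ r, if y r = a then μ r else 0 := by
  rw [multisetOf, Multiset.count_bind]
  simp [Multiset.count_replicate, Finset.sum]

lemma mem_multisetOf {m' : ℕ} (y : Fin m' → ℝ) (μ : Fin m' → ℕ) (a : ℝ) :
    a ∈ multisetOf y μ ↔ ∃ r, μ r ≠ 0 ∧ a = y r := by
  simp [multisetOf, Multiset.mem_replicate]

lemma realizable_to_ilp (n m' : ℕ) (y : Fin m' → ℝ) (μ : Fin m' → ℕ)
    (hy : StrictAnti y) (x : Fin n → ℝ)
    (hΔ : deltaMultiset n x = multisetOf y μ) :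
    (∃ (P : Fin n → Fin n → Fin m' → ℝ)
       (T : Fin n → Fin n → Fin n → Fin m' × Fin m' × Fin m' → ℝ),
      (∀ i j : Fin n, i < j → ∀ r : Fin m', P i j r = 0 ∨ P i j r = 1) ∧
      (∀ i j k : Fin n, i < j → j < k → ∀ rst ∈ twoPartitions y μ,
        T i j k rst = 0 ∨ T i j k rst = 1) ∧
      (∀ i j : Fin n, i < j → ∑ r : Fin m', P i j r = 1) ∧
      (∀ r : Fin m',
        ∑ p ∈ Finset.univ.filter (fun p : Fin n × Fin n => p.1 < p.2),
          P p.1 p.2 r = (μ r : ℝ)) ∧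
      (∀ i j k : Fin n, i < j → j < k →
        ∑ rst ∈ twoPartitions y μ, T i j k rst = 1) ∧
      (∀ i j k : Fin n, i < j → j < k → ∀ r : Fin m',
        P i j r = ∑ rst ∈ (twoPartitions y μ).filter (fun rst => rst.1 = r),
          T i j k rst) ∧
      (∀ i j k : Fin n, i < j → j < k → ∀ s : Fin m',
        P j k s = ∑ rst ∈ (twoPartitions y μ).filter (fun rst => rst.2.1 = s),
          T i j k rst) ∧
      (∀ i j k : Fin n, i < j → j < k → ∀ t : Fin m',
        P i k t = ∑ rst ∈ (twoPartitions y μ).filter (fun rst => rst.2.2 = t),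
          T i j k rst)) := by
  classical
  have hinj : Function.Injective y := hy.injective
  -- every difference is one of the values
  have hex : ∀ i j : Fin n, i < j → ∃ r, x j - x i = y r := by
    intro i j hij
    have hmem : x j - x i ∈ deltaMultiset n x := by
      rw [deltaMultiset]
      exact Multiset.mem_map.mpr ⟨(i, j), by simp [Finset.mem_filter, hij], rfl⟩
    rw [hΔ, mem_multisetOf] at hmem
    obtain ⟨r, -, hr⟩ := hmem
    exact ⟨r, hr⟩
  have hcard : ∀ r : Fin m',
      (((Finset.univ.filter (fun p : Fin n × Fin n => p.1 < p.2)).filter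
        (fun p => y r = x p.2 - x p.1)).card) = μ r := by
    intro r
    have h1 := count_deltaMultiset n x (y r)
    rw [hΔ, count_multisetOf] at h1
    have h2 : (∑ r', if y r' = y r then μ r' else 0) = μ r := by
      have : ∀ r' : Fin m', (if y r' = y r then μ r' else 0) = if r' = r then μ r' else 0 := by
        intro r'
        by_cases h : r' = r
        · simp [h]
        · rw [if_neg (fun hc => h (hinj hc)), if_neg h]
      rw [Finset.sum_congr rfl fun r' _ => this r', Finset.sum_ite_eq' Finset.univ r μ]
      simp
    omega
  have hPmem : ∀ i j k : Fin n, i < j → j < k → ∀ r₀ s₀ t₀ : Fin m',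
      x j - x i = y r₀ → x k - x j = y s₀ → x k - x i = y t₀ →
      (r₀, s₀, t₀) ∈ twoPartitions y μ := by
    intro i j k hij hjk r₀ s₀ t₀ hr₀ hs₀ ht₀
    rw [twoPartitions, Finset.mem_filter]
    refine ⟨Finset.mem_univ _, by rw [← hr₀, ← hs₀, ← ht₀]; ring, ?_⟩
    by_cases h : r₀ = s₀
    · right
      show 2 ≤ μ r₀
      have h2 : 1 < ((Finset.univ.filter (fun p : Fin n × Fin n => p.1 < p.2)).filter
          (fun p => y r₀ = x p.2 - x p.1)).card := by
        apply Finset.one_lt_card.mpr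
        refine ⟨(i, j), ?_, (j, k), ?_, ?_⟩
        · exact Finset.mem_filter.mpr ⟨Finset.mem_filter.mpr ⟨Finset.mem_univ _, hij⟩, hr₀.symm⟩
        · refine Finset.mem_filter.mpr ⟨Finset.mem_filter.mpr ⟨Finset.mem_univ _, hjk⟩, ?_⟩
          rw [h]; exact hs₀.symm
        · intro hc
          have : i = j := congrArg Prod.fst hc
          exact absurd this (ne_of_lt hij)
      rw [hcard r₀] at h2
      omega
    · left; exact h
  have hkey : ∀ i j k : Fin n, i < j → j < k → ∀ r₀ s₀ t₀ : Fin m',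
      x j - x i = y r₀ → x k - x j = y s₀ → x k - x i = y t₀ →
      ∀ rst : Fin m' × Fin m' × Fin m',
      (if i < j ∧ j < k ∧ x j - x i = y rst.1 ∧ x k - x j = y rst.2.1 ∧
        x k - x i = y rst.2.2 then (1:ℝ) else 0) = if rst = (r₀, s₀, t₀) then 1 else 0 := by
    intro i j k hij hjk r₀ s₀ t₀ hr₀ hs₀ ht₀
    rintro ⟨r, s, t⟩
    by_cases h : (r, s, t) = (r₀, s₀, t₀)
    · rw [if_pos h]
      have e1 : r = r₀ := congrArg Prod.fst h
      have e2 : s = s₀ := congrArg (fun p => p.2.1) h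
      have e3 : t = t₀ := congrArg (fun p => p.2.2) h
      subst e1; subst e2; subst e3
      simp [hij, hjk, hr₀, hs₀, ht₀]
    · rw [if_neg ?_, if_neg h]
      rintro ⟨-, -, h1, h2, h3⟩
      apply h
      have e1 : r = r₀ := hinj (h1.symm.trans hr₀)
      have e2 : s = s₀ := hinj (h2.symm.trans hs₀)
      have e3 : t = t₀ := hinj (h3.symm.trans ht₀)
      rw [e1, e2, e3]
  refine ⟨fun i j r => if i < j ∧ x j - x i = y r then 1 else 0,
    fun i j k rst => if i < j ∧ j < k ∧ x j - x i = y rst.1 ∧ x k - x j = y rst.2.1 ∧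
      x k - x i = y rst.2.2 then 1 else 0,
    ?_, ?_, ?_, ?_, ?_, ?_, ?_, ?_⟩
  · intro i j _ r; dsimp only; split_ifs <;> simp
  · intro i j k _ _ rst _; dsimp only; split_ifs <;> simp
  · -- (a)
    intro i j hij
    obtain ⟨r₀, hr₀⟩ := hex i j hij
    dsimp only
    have key : ∀ r : Fin m',
        (if i < j ∧ x j - x i = y r then (1:ℝ) else 0) = if r = r₀ then 1 else 0 := by
      intro r
      by_cases h : r = r₀
      · subst h; simp [hij, hr₀]
      · rw [if_neg (fun hc => h (hinj (hc.2.symm.trans hr₀))), if_neg h]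
    rw [Finset.sum_congr rfl fun r _ => key r]
    simp
  · -- (b)
    intro r
    dsimp only
    have key : ∀ p ∈ Finset.univ.filter (fun p : Fin n × Fin n => p.1 < p.2),
        (if p.1 < p.2 ∧ x p.2 - x p.1 = y r then (1:ℝ) else 0)
          = if y r = x p.2 - x p.1 then 1 else 0 := by
      intro p hp
      have hlt := (Finset.mem_filter.mp hp).2
      by_cases h : x p.2 - x p.1 = y r
      · simp [hlt, h]
      · rw [if_neg (fun hc => h hc.2), if_neg (fun hc => h hc.symm)]
    rw [Finset.sum_congr rfl key, Finset.sum_boole, hcard r]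
  · -- (c)
    intro i j k hij hjk
    obtain ⟨r₀, hr₀⟩ := hex i j hij
    obtain ⟨s₀, hs₀⟩ := hex j k hjk
    obtain ⟨t₀, ht₀⟩ := hex i k (hij.trans hjk)
    dsimp only
    rw [Finset.sum_congr rfl fun rst _ => hkey i j k hij hjk r₀ s₀ t₀ hr₀ hs₀ ht₀ rst,
      Finset.sum_ite_eq' (twoPartitions y μ) ((r₀, s₀, t₀)) (fun _ => (1:ℝ))]
    simp [hPmem i j k hij hjk r₀ s₀ t₀ hr₀ hs₀ ht₀]
  · -- (d)
    intro i j k hij hjk r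
    obtain ⟨r₀, hr₀⟩ := hex i j hij
    obtain ⟨s₀, hs₀⟩ := hex j k hjk
    obtain ⟨t₀, ht₀⟩ := hex i k (hij.trans hjk)
    dsimp only
    rw [Finset.sum_congr rfl fun rst _ => hkey i j k hij hjk r₀ s₀ t₀ hr₀ hs₀ ht₀ rst,
      Finset.sum_ite_eq' _ ((r₀, s₀, t₀)) (fun _ => (1:ℝ))]
    by_cases h : r₀ = r
    · rw [if_pos (Finset.mem_filter.mpr ⟨hPmem i j k hij hjk r₀ s₀ t₀ hr₀ hs₀ ht₀, h⟩),
        if_pos ⟨hij, by rw [← h]; exact hr₀⟩]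
    · rw [if_neg (show ¬((r₀, s₀, t₀) ∈ Finset.filter
          (fun rst : Fin m' × Fin m' × Fin m' => rst.1 = r) (twoPartitions y μ)) from
          fun hc => h (Finset.mem_filter.mp hc).2),
        if_neg (show ¬(i < j ∧ x j - x i = y r) from
          fun hc => h (hinj (hc.2.symm.trans hr₀)).symm)]
  · -- (e)
    intro i j k hij hjk s
    obtain ⟨r₀, hr₀⟩ := hex i j hij
    obtain ⟨s₀, hs₀⟩ := hex j k hjk
    obtain ⟨t₀, ht₀⟩ := hex i k (hij.trans hjk)
    dsimp only
    rw [Finset.sum_congr rfl fun rst _ => hkey i j k hij hjk r₀ s₀ t₀ hr₀ hs₀ ht₀ rst,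
      Finset.sum_ite_eq' _ ((r₀, s₀, t₀)) (fun _ => (1:ℝ))]
    by_cases h : s₀ = s
    · rw [if_pos (Finset.mem_filter.mpr ⟨hPmem i j k hij hjk r₀ s₀ t₀ hr₀ hs₀ ht₀, h⟩),
        if_pos ⟨hjk, by rw [← h]; exact hs₀⟩]
    · rw [if_neg (show ¬((r₀, s₀, t₀) ∈ Finset.filter
          (fun rst : Fin m' × Fin m' × Fin m' => rst.2.1 = s) (twoPartitions y μ)) from
          fun hc => h (Finset.mem_filter.mp hc).2),
        if_neg (show ¬(j < k ∧ x k - x j = y s) from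
          fun hc => h (hinj (hc.2.symm.trans hs₀)).symm)]
  · -- (f)
    intro i j k hij hjk t
    obtain ⟨r₀, hr₀⟩ := hex i j hij
    obtain ⟨s₀, hs₀⟩ := hex j k hjk
    obtain ⟨t₀, ht₀⟩ := hex i k (hij.trans hjk)
    dsimp only
    rw [Finset.sum_congr rfl fun rst _ => hkey i j k hij hjk r₀ s₀ t₀ hr₀ hs₀ ht₀ rst,
      Finset.sum_ite_eq' _ ((r₀, s₀, t₀)) (fun _ => (1:ℝ))]
    by_cases h : t₀ = t
    · rw [if_pos (Finset.mem_filter.mpr ⟨hPmem i j k hij hjk r₀ s₀ t₀ hr₀ hs₀ ht₀, h⟩),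
        if_pos ⟨hij.trans hjk, by rw [← h]; exact ht₀⟩]
    · rw [if_neg (show ¬((r₀, s₀, t₀) ∈ Finset.filter
          (fun rst : Fin m' × Fin m' × Fin m' => rst.2.2 = t) (twoPartitions y μ)) from
          fun hc => h (Finset.mem_filter.mp hc).2),
        if_neg (show ¬(i < k ∧ x k - x i = y t) from
          fun hc => h (hinj (hc.2.symm.trans ht₀)).symm)]

lemma ilp_to_realizable (n m' : ℕ) (y : Fin m' → ℝ) (μ : Fin m' → ℕ)
    (hy : StrictAnti y) (hpos : ∀ r, 0 < y r) (hμ : ∀ r, 1 ≤ μ r)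
    (hsum : ∑ r, μ r = n.choose 2)
    (P : Fin n → Fin n → Fin m' → ℝ)
    (T : Fin n → Fin n → Fin n → Fin m' × Fin m' × Fin m' → ℝ)
    (hPb : ∀ i j : Fin n, i < j → ∀ r : Fin m', P i j r = 0 ∨ P i j r = 1)
    (hTb : ∀ i j k : Fin n, i < j → j < k → ∀ rst ∈ twoPartitions y μ,
        T i j k rst = 0 ∨ T i j k rst = 1)
    (ha : ∀ i j : Fin n, i < j → ∑ r : Fin m', P i j r = 1)
    (hb : ∀ r : Fin m',
        ∑ p ∈ Finset.univ.filter (fun p : Fin n × Fin n => p.1 < p.2),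
          P p.1 p.2 r = (μ r : ℝ))
    (hc : ∀ i j k : Fin n, i < j → j < k →
        ∑ rst ∈ twoPartitions y μ, T i j k rst = 1)
    (hd : ∀ i j k : Fin n, i < j → j < k → ∀ r : Fin m',
        P i j r = ∑ rst ∈ (twoPartitions y μ).filter (fun rst => rst.1 = r),
          T i j k rst)
    (he : ∀ i j k : Fin n, i < j → j < k → ∀ s : Fin m',
        P j k s = ∑ rst ∈ (twoPartitions y μ).filter (fun rst => rst.2.1 = s),
          T i j k rst)
    (hfm : ∀ i j k : Fin n, i < j → j < k → ∀ t : Fin m',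
        P i k t = ∑ rst ∈ (twoPartitions y μ).filter (fun rst => rst.2.2 = t),
          T i j k rst) :
    ∃ x : Fin n → ℝ, StrictMono x ∧ deltaMultiset n x = multisetOf y μ := by
  classical
  have hinj : Function.Injective y := hy.injective
  by_cases hn : n < 2
  · -- trivial case: no intervals, m' = 0
    have hm0 : m' = 0 := by
      have h1 : m' ≤ ∑ r, μ r := by
        calc m' = ∑ _r : Fin m', 1 := by simp
        _ ≤ ∑ r, μ r := Finset.sum_le_sum fun r _ => hμ r
      have h2 : n.choose 2 = 0 := by
        interval_cases n <;> simp
      omega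
    refine ⟨fun i => (i : ℕ), fun a b hab => by dsimp only; exact_mod_cast hab, ?_⟩
    have hempty : (Finset.univ.filter (fun p : Fin n × Fin n => p.1 < p.2)) = ∅ := by
      refine Finset.filter_eq_empty_iff.mpr fun p _ => ?_
      have h1 : (p.1 : ℕ) < n := p.1.isLt
      have h2 : (p.2 : ℕ) < n := p.2.isLt
      intro hlt
      have := (Fin.lt_iff_val_lt_val.mp hlt)
      omega
    subst hm0
    rw [deltaMultiset, hempty]
    simp [multisetOf]
  · push_neg at hn
    have hm : 0 < m' := by
      rcases Nat.eq_zero_or_pos m' with h | h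
      · exfalso
        subst h
        have : n.choose 2 = 0 := by rw [← hsum]; simp
        have := Nat.choose_pos (show 2 ≤ n from hn)
        omega
      · exact h
    -- unique label per interval
    have hQex : ∀ i j : Fin n, i < j →
        ∃ r₀ : Fin m', P i j r₀ = 1 ∧ ∀ r, P i j r = 1 → r = r₀ := by
      intro i j hij
      obtain ⟨r₀, -, h1, h0⟩ := binary_sum_one Finset.univ (P i j)
        (fun r _ => hPb i j hij r) (ha i j hij)
      refine ⟨r₀, h1, fun r hr => ?_⟩
      by_contra hne
      rw [h0 r (Finset.mem_univ r) hne] at hr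
      norm_num at hr
    let rr : Fin n → Fin n → Fin m' := fun i j =>
      if h : i < j then Classical.choose (hQex i j h) else ⟨0, hm⟩
    have hrr1 : ∀ i j : Fin n, (h : i < j) → P i j (rr i j) = 1 := by
      intro i j h
      show P i j (if h : i < j then Classical.choose (hQex i j h) else ⟨0, hm⟩) = 1
      rw [dif_pos h]
      exact (Classical.choose_spec (hQex i j h)).1
    have hrru : ∀ i j : Fin n, (h : i < j) → ∀ r, P i j r = 1 → r = rr i j := by
      intro i j h r hr
      show r = (if h : i < j then Classical.choose (hQex i j h) else ⟨0, hm⟩)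
      rw [dif_pos h]
      exact (Classical.choose_spec (hQex i j h)).2 r hr
    -- additivity from triangle constraints
    have htri : ∀ i j k : Fin n, i < j → j < k →
        y (rr i j) + y (rr j k) = y (rr i k) := by
      intro i j k hij hjk
      obtain ⟨rst₀, hmem, h1, h0⟩ := binary_sum_one (twoPartitions y μ) (T i j k)
        (hTb i j k hij hjk) (hc i j k hij hjk)
      have hsub : ∀ (pred : Fin m' × Fin m' × Fin m' → Prop) [DecidablePred pred],
          pred rst₀ →
          ∑ rst ∈ (twoPartitions y μ).filter pred, T i j k rst = 1 := by
        intro pred _ hpred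
        rw [Finset.sum_eq_single_of_mem rst₀
          (Finset.mem_filter.mpr ⟨hmem, hpred⟩)
          (fun b hb hne => h0 b (Finset.mem_filter.mp hb).1 hne)]
        exact h1
      have e1 : rst₀.1 = rr i j := by
        apply hrru i j hij
        rw [hd i j k hij hjk rst₀.1]
        exact hsub (fun rst => rst.1 = rst₀.1) rfl
      have e2 : rst₀.2.1 = rr j k := by
        apply hrru j k hjk
        rw [he i j k hij hjk rst₀.2.1]
        exact hsub (fun rst => rst.2.1 = rst₀.2.1) rfl
      have e3 : rst₀.2.2 = rr i k := by
        apply hrru i k (hij.trans hjk)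
        rw [hfm i j k hij hjk rst₀.2.2]
        exact hsub (fun rst => rst.2.2 = rst₀.2.2) rfl
      rw [twoPartitions, Finset.mem_filter] at hmem
      rw [← e1, ← e2, ← e3]
      exact hmem.2.1
    -- construct x
    set i0 : Fin n := ⟨0, by omega⟩ with hi0
    set x : Fin n → ℝ := fun i => if i = i0 then 0 else ∑ r, P i0 i r * y r with hx
    have hxv : ∀ j : Fin n, i0 < j → x j = y (rr i0 j) := by
      intro j hj
      have hne : j ≠ i0 := fun hc' => by
        rw [hc'] at hj; exact lt_irrefl _ hj
      rw [hx]
      dsimp only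
      rw [if_neg hne]
      rw [Finset.sum_eq_single (rr i0 j)]
      · rw [hrr1 i0 j hj, one_mul]
      · intro r _ hne'
        rcases hPb i0 j hj r with h | h
        · rw [h, zero_mul]
        · exact absurd (hrru i0 j hj r h) hne'
      · intro habs; exact absurd (Finset.mem_univ _) habs
    have hdiff : ∀ i j : Fin n, i < j → x j - x i = y (rr i j) := by
      intro i j hij
      by_cases hi : i = i0
      · subst hi
        rw [hxv j hij, hx]
        simp
      · have h0i : i0 < i := by
          rw [Fin.lt_iff_val_lt_val]
          show 0 < (i : ℕ)
          rcases Nat.eq_zero_or_pos (i : ℕ) with h | h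
          · exact absurd (Fin.ext h : i = i0) hi
          · exact h
        rw [hxv j (h0i.trans hij), hxv i h0i]
        have := htri i0 i j h0i hij
        linarith
    refine ⟨x, ?_, ?_⟩
    · intro a b hab
      have h1 := hdiff a b hab
      have h2 := hpos (rr a b)
      linarith
    · refine Multiset.ext.mpr fun a => ?_
      rw [count_deltaMultiset, count_multisetOf]
      by_cases hha : ∃ r, y r = a
      · obtain ⟨r₀, hr₀⟩ := hha
        subst hr₀
        have hrhs : (∑ r, if y r = y r₀ then μ r else 0) = μ r₀ := by
          have : ∀ r : Fin m', (if y r = y r₀ then μ r else 0) = if r = r₀ then μ r else 0 := by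
            intro r
            by_cases h : r = r₀
            · simp [h]
            · rw [if_neg (fun hc' => h (hinj hc')), if_neg h]
          rw [Finset.sum_congr rfl fun r _ => this r, Finset.sum_ite_eq' Finset.univ r₀ μ]
          simp
        rw [hrhs]
        have hfe : (Finset.univ.filter (fun p : Fin n × Fin n => p.1 < p.2)).filter
            (fun p => y r₀ = x p.2 - x p.1)
            = (Finset.univ.filter (fun p : Fin n × Fin n => p.1 < p.2)).filter
            (fun p => P p.1 p.2 r₀ = 1) := by
          refine Finset.filter_congr fun p hp => ?_
          have hlt := (Finset.mem_filter.mp hp).2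
          constructor
          · intro h
            have : r₀ = rr p.1 p.2 := hinj (h.trans (hdiff p.1 p.2 hlt))
            rw [this]
            exact hrr1 p.1 p.2 hlt
          · intro h
            have : r₀ = rr p.1 p.2 := hrru p.1 p.2 hlt r₀ h
            rw [this, ← hdiff p.1 p.2 hlt]
        rw [hfe]
        have hcount := hb r₀
        rw [sum_binary_eq_card _ _ (fun p hp => hPb p.1 p.2 (Finset.mem_filter.mp hp).2 r₀)]
          at hcount
        exact_mod_cast hcount
      · push_neg at hha
        have hlhs : (Finset.univ.filter (fun p : Fin n × Fin n => p.1 < p.2)).filter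
            (fun p => a = x p.2 - x p.1) = ∅ := by
          refine Finset.filter_eq_empty_iff.mpr fun p hp => ?_
          have hlt := (Finset.mem_filter.mp hp).2
          rw [hdiff p.1 p.2 hlt]
          exact fun hc' => hha (rr p.1 p.2) hc'.symm
        rw [hlhs]
        simp only [Finset.card_empty, Nat.cast_zero]
        symm
        refine Finset.sum_eq_zero fun r _ => if_neg (hha r)

/-- The purely combinatorial triangle-based ILP — binary assignment
variables `P^r_{ij}` and binary triangle variables `T^{rst}_{ijk}` for `(r,s,t) ∈ 𝒫_y`
satisfying (a) `Σ_r P^r_{ij} = 1`, (b) `Σ_{i<j} P^r_{ij} = μ_r`,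
(c) `Σ_{(r,s,t)∈𝒫_y} T^{rst}_{ijk} = 1`, and the marginalization identities
(d) `P^r_{ij} = Σ_{(r,s,t)∈𝒫_y} T^{rst}_{ijk}`, (e) `P^s_{jk} = Σ T`,
(f) `P^t_{ik} = Σ T` — is solvable iff `Y = (y, μ)` is realizable. -/
theorem triangle_ilp_feasible_iff_realizable (n m' : ℕ)
    (y : Fin m' → ℝ) (μ : Fin m' → ℕ)
    (hy : StrictAnti y) (hpos : ∀ r, 0 < y r) (hμ : ∀ r, 1 ≤ μ r)
    (hsum : ∑ r, μ r = n.choose 2) :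
    (∃ (P : Fin n → Fin n → Fin m' → ℝ)
       (T : Fin n → Fin n → Fin n → Fin m' × Fin m' × Fin m' → ℝ),
      (∀ i j : Fin n, i < j → ∀ r : Fin m', P i j r = 0 ∨ P i j r = 1) ∧
      (∀ i j k : Fin n, i < j → j < k → ∀ rst ∈ twoPartitions y μ,
        T i j k rst = 0 ∨ T i j k rst = 1) ∧
      (∀ i j : Fin n, i < j → ∑ r : Fin m', P i j r = 1) ∧
      (∀ r : Fin m',
        ∑ p ∈ Finset.univ.filter (fun p : Fin n × Fin n => p.1 < p.2),
          P p.1 p.2 r = (μ r : ℝ)) ∧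
      (∀ i j k : Fin n, i < j → j < k →
        ∑ rst ∈ twoPartitions y μ, T i j k rst = 1) ∧
      (∀ i j k : Fin n, i < j → j < k → ∀ r : Fin m',
        P i j r = ∑ rst ∈ (twoPartitions y μ).filter (fun rst => rst.1 = r),
          T i j k rst) ∧
      (∀ i j k : Fin n, i < j → j < k → ∀ s : Fin m',
        P j k s = ∑ rst ∈ (twoPartitions y μ).filter (fun rst => rst.2.1 = s),
          T i j k rst) ∧
      (∀ i j k : Fin n, i < j → j < k → ∀ t : Fin m',
        P i k t = ∑ rst ∈ (twoPartitions y μ).filter (fun rst => rst.2.2 = t),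
          T i j k rst)) ↔
    (∃ x : Fin n → ℝ, StrictMono x ∧ deltaMultiset n x = multisetOf y μ) := by
  constructor
  · rintro ⟨P, T, h1, h2, h3, h4, h5, h6, h7, h8⟩
    exact ilp_to_realizable n m' y μ hy hpos hμ hsum P T h1 h2 h3 h4 h5 h6 h7 h8
  · rintro ⟨x, _, hΔ⟩
    exact realizable_to_ilp n m' y μ hy x hΔ
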